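/- arXiv:2011.04938 — 3 statements merged into one kernel-verified Lean document; each statement's English description precedes it below -/
import Mathlib

section
/- Let 0 < α < 1, T > 0, N ∈ ℕ. Let A : [0,T] → M_N(ℝ) be measurable and essentially bounded, and let F : [0,T] → ℝ^N be measurable and essentially bounded. Then the Volterra integral equation c(t) = -(1/Γ(α)) ∫₀^t (t-τ)^{α-1} A(τ) c(τ) dτ + (1/Γ(α)) ∫₀^t (t-τ)^{α-1} F(τ) dτ, t ∈ [0,T], has exactly one continuous solution c : [0,T] → ℝ^N (in particular c(0) = 0). -/
open MeasureTheory

/-- The right-hand side of the Volterra integral equation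
`c(t) = -(1/Γ(α)) ∫_0^t (t-τ)^(α-1) A(τ) c(τ) dτ + (1/Γ(α)) ∫_0^t (t-τ)^(α-1) F(τ) dτ`,
where the matrix `A(τ)` acts on Euclidean space `ℝ^N`. -/
noncomputable def volterraRHS {N : ℕ} (α : ℝ) (A : ℝ → Matrix (Fin N) (Fin N) ℝ)
    (F : ℝ → EuclideanSpace ℝ (Fin N)) (c : ℝ → EuclideanSpace ℝ (Fin N)) (t : ℝ) :
    EuclideanSpace ℝ (Fin N) :=
  (-(1 / Real.Gamma α)) •
      (∫ τ in (0 : ℝ)..t, ((t - τ) ^ (α - 1)) • (Matrix.toEuclideanCLM (𝕜 := ℝ) (A τ)) (c τ))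
    + (1 / Real.Gamma α) • ∫ τ in (0 : ℝ)..t, ((t - τ) ^ (α - 1)) • F τ



section Aux
open Set

variable {E : Type*} [NormedAddCommGroup E] [NormedSpace ℝ E]

lemma volterra_kernel_intervalIntegrable {α : ℝ} (hα : 0 < α) (t a b : ℝ) :
    IntervalIntegrable (fun τ : ℝ => (t - τ) ^ (α - 1)) volume a b := by
  have h := (intervalIntegral.intervalIntegrable_rpow' (a := t - b) (b := t - a)
    (r := α - 1) (by linarith)).comp_sub_left t
  simpa using h.symm

lemma volterra_kernel_integral {α : ℝ} (hα : 0 < α) (t a b : ℝ) :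
    ∫ τ in a..b, (t - τ) ^ (α - 1) = ((t - a) ^ α - (t - b) ^ α) / α := by
  have h := intervalIntegral.integral_comp_sub_left (a := a) (b := b)
    (fun x : ℝ => x ^ (α - 1)) t
  rw [h, integral_rpow (Or.inl (by linarith : (-1:ℝ) < α - 1))]
  have : α - 1 + 1 = α := by ring
  rw [this]

lemma volterra_integrand_integrable {α : ℝ} (hα : 0 < α) {g : ℝ → E} {a b C : ℝ} (t : ℝ)
    (hg : AEStronglyMeasurable g (volume.restrict (Set.uIoc a b)))
    (hC : ∀ᵐ τ ∂(volume.restrict (Set.uIoc a b)), ‖g τ‖ ≤ C) :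
    IntervalIntegrable (fun τ => (t - τ) ^ (α - 1) • g τ) volume a b := by
  rw [intervalIntegrable_iff] at *
  have hk : IntegrableOn (fun τ : ℝ => |((t - τ) ^ (α - 1))| * C) (Set.uIoc a b) volume := by
    rw [← intervalIntegrable_iff]
    exact (volterra_kernel_intervalIntegrable hα t a b).abs.mul_const C
  refine hk.integrable.mono' ?_ ?_
  · exact (((measurable_const.sub measurable_id).pow_const (α - 1)).aestronglyMeasurable).smul hg
  · filter_upwards [hC] with τ hτ
    rw [norm_smul, Real.norm_eq_abs]
    exact mul_le_mul_of_nonneg_left hτ (abs_nonneg _)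

end Aux


section Aux2

variable {E : Type*} [NormedAddCommGroup E] [NormedSpace ℝ E]

lemma volterra_rpow_sub_le {x y p : ℝ} (hy : 0 ≤ y) (hxy : y ≤ x) (hp : 0 ≤ p) (hp1 : p ≤ 1) :
    x ^ p ≤ y ^ p + (x - y) ^ p := by
  have h := NNReal.rpow_add_le_add_rpow y.toNNReal (x - y).toNNReal hp hp1
  rw [← Real.toNNReal_add hy (by linarith)] at h
  have h2 := NNReal.coe_le_coe.2 h
  rw [NNReal.coe_add] at h2
  simp only [NNReal.coe_rpow, Real.coe_toNNReal _ (by linarith : (0:ℝ) ≤ y + (x - y)),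
    Real.coe_toNNReal _ hy, Real.coe_toNNReal _ (by linarith : (0:ℝ) ≤ x - y)] at h2
  simpa using h2

lemma volterra_norm_integral_le {α : ℝ} (hα : 0 < α) {g : ℝ → E} {a b t C : ℝ}
    (hab : a ≤ b) (hbt : b ≤ t) (h0a : 0 ≤ a) (hC0 : 0 ≤ C)
    (hg : AEStronglyMeasurable g (volume.restrict (Set.uIoc a b)))
    (hC : ∀ᵐ τ ∂(volume.restrict (Set.uIoc a b)), ‖g τ‖ ≤ C) :
    ‖∫ τ in a..b, (t - τ) ^ (α - 1) • g τ‖ ≤ C * (((t - a) ^ α - (t - b) ^ α) / α) := by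
  have hbd : IntervalIntegrable (fun τ : ℝ => (t - τ) ^ (α - 1) * C) volume a b :=
    (volterra_kernel_intervalIntegrable hα t a b).mul_const C
  have h := intervalIntegral.norm_integral_le_abs_of_norm_le (μ := volume)
    (f := fun τ => (t - τ) ^ (α - 1) • g τ) (g := fun τ => (t - τ) ^ (α - 1) * C) ?_ hbd
  · calc ‖∫ τ in a..b, (t - τ) ^ (α - 1) • g τ‖ ≤ |∫ τ in a..b, (t - τ) ^ (α - 1) * C| := h
    _ = |(∫ τ in a..b, (t - τ) ^ (α - 1)) * C| := by rw [intervalIntegral.integral_mul_const]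
    _ = |(((t - a) ^ α - (t - b) ^ α) / α) * C| := by rw [volterra_kernel_integral hα]
    _ = (((t - a) ^ α - (t - b) ^ α) / α) * C := by
        rw [abs_of_nonneg]
        apply mul_nonneg _ hC0
        apply div_nonneg _ hα.le
        have := Real.rpow_le_rpow (by linarith : (0:ℝ) ≤ t - b) (by linarith : t - b ≤ t - a) hα.le
        linarith
    _ = C * (((t - a) ^ α - (t - b) ^ α) / α) := by ring
  · filter_upwards [hC, ae_restrict_mem measurableSet_uIoc] with τ hτ hmem
    rw [Set.uIoc_of_le hab] at hmem
    rw [norm_smul, Real.norm_eq_abs, abs_of_nonneg (Real.rpow_nonneg (by linarith [hmem.2] : (0:ℝ) ≤ t - τ) _)]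
    exact mul_le_mul_of_nonneg_left hτ (Real.rpow_nonneg (by linarith [hmem.2]) _)

lemma volterra_exp_integral_le {α l : ℝ} (hα : 0 < α) (hα1 : α < 1) (hl : 0 < l) {t : ℝ}
    (ht : 0 ≤ t) :
    ∫ τ in (0:ℝ)..t, (t - τ) ^ (α - 1) * Real.exp (l * τ) ≤
      Real.exp (l * t) * (Real.Gamma α / l ^ α) := by
  have h1 : (∫ τ in (0:ℝ)..t, (t - τ) ^ (α - 1) * Real.exp (l * τ)) =
      Real.exp (l * t) * ∫ x in (0:ℝ)..t, x ^ (α - 1) * Real.exp (-(l * x)) := by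
    rw [← intervalIntegral.integral_const_mul]
    have h2 := intervalIntegral.integral_comp_sub_left (a := (0:ℝ)) (b := t)
      (fun x : ℝ => Real.exp (l * t) * (x ^ (α - 1) * Real.exp (-(l * x)))) t
    rw [sub_self, sub_zero] at h2
    rw [← h2]
    apply intervalIntegral.integral_congr
    intro τ _
    simp only
    rw [show Real.exp (l * t) * ((t - τ) ^ (α - 1) * Real.exp (-(l * (t - τ)))) =
      (t - τ) ^ (α - 1) * (Real.exp (l * t) * Real.exp (-(l * (t - τ)))) from by ring,
      ← Real.exp_add]
    congr 2
    ring
  rw [h1]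
  have hint : IntegrableOn (fun x : ℝ => x ^ (α - 1) * Real.exp (-(l * x))) (Set.Ioi 0) volume := by
    have := integrableOn_rpow_mul_exp_neg_mul_rpow (p := 1) (s := α - 1) (b := l)
      (by linarith) zero_lt_one hl
    simpa [Real.rpow_one, neg_mul] using this
  have hval : (∫ x in Set.Ioi (0:ℝ), x ^ (α - 1) * Real.exp (-(l * x))) =
      l ^ (-α) * Real.Gamma α := by
    have := integral_rpow_mul_exp_neg_mul_rpow (p := 1) (q := α - 1) (b := l)
      (by norm_num) (by linarith) hl
    simp only [Real.rpow_one, sub_add_cancel, div_one, one_div_one, mul_one, neg_mul] at this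
    exact this
  have hle : (∫ x in (0:ℝ)..t, x ^ (α - 1) * Real.exp (-(l * x))) ≤
      ∫ x in Set.Ioi (0:ℝ), x ^ (α - 1) * Real.exp (-(l * x)) := by
    rw [intervalIntegral.integral_of_le ht]
    apply setIntegral_mono_set hint
    · filter_upwards [ae_restrict_mem measurableSet_Ioi] with x hx
      exact mul_nonneg (Real.rpow_nonneg (le_of_lt hx) _) (Real.exp_nonneg _)
    · exact HasSubset.Subset.eventuallyLE Set.Ioc_subset_Ioi_self
  have : l ^ (-α) * Real.Gamma α = Real.Gamma α / l ^ α := by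
    rw [Real.rpow_neg hl.le]
    ring
  rw [← this]
  exact mul_le_mul_of_nonneg_left (by rw [← hval]; exact hle) (Real.exp_nonneg _)

lemma volterra_G_holder {α : ℝ} (hα : 0 < α) (hα1 : α < 1) {g : ℝ → E} {T C : ℝ}
    (hg : StronglyMeasurable g)
    (hC : ∀ᵐ τ ∂(volume.restrict (Set.Icc (0:ℝ) T)), ‖g τ‖ ≤ C) (hC0 : 0 ≤ C)
    {s t : ℝ} (hs : s ∈ Set.Icc (0:ℝ) T) (ht : t ∈ Set.Icc (0:ℝ) T) (hst : s ≤ t) :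
    ‖(∫ τ in (0:ℝ)..t, (t - τ) ^ (α - 1) • g τ) - ∫ τ in (0:ℝ)..s, (s - τ) ^ (α - 1) • g τ‖
      ≤ (2 * C / α) * (t - s) ^ α := by
  obtain ⟨hs0, hsT⟩ := hs
  obtain ⟨ht0, htT⟩ := ht
  have hae : ∀ a b : ℝ, 0 ≤ a → b ≤ T → a ≤ b →
      (∀ᵐ τ ∂(volume.restrict (Set.uIoc a b)), ‖g τ‖ ≤ C) := by
    intro a b h1 h2 h3
    refine hC.filter_mono (ae_mono (Measure.restrict_mono ?_ le_rfl))
    rw [Set.uIoc_of_le h3]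
    exact fun x hx => ⟨by linarith [hx.1], by linarith [hx.2]⟩
  have hgm : ∀ a b : ℝ, AEStronglyMeasurable g (volume.restrict (Set.uIoc a b)) :=
    fun a b => hg.aestronglyMeasurable.restrict
  have i1 : IntervalIntegrable (fun τ => (t - τ) ^ (α - 1) • g τ) volume 0 s :=
    volterra_integrand_integrable hα t (hgm 0 s) (hae 0 s le_rfl (by linarith) hs0)
  have i2 : IntervalIntegrable (fun τ => (t - τ) ^ (α - 1) • g τ) volume s t :=
    volterra_integrand_integrable hα t (hgm s t) (hae s t hs0 htT hst)
  have i3 : IntervalIntegrable (fun τ => (s - τ) ^ (α - 1) • g τ) volume 0 s :=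
    volterra_integrand_integrable hα s (hgm 0 s) (hae 0 s le_rfl (by linarith) hs0)
  have hsplit : (∫ τ in (0:ℝ)..t, (t - τ) ^ (α - 1) • g τ) =
      (∫ τ in (0:ℝ)..s, (t - τ) ^ (α - 1) • g τ) + ∫ τ in s..t, (t - τ) ^ (α - 1) • g τ :=
    (intervalIntegral.integral_add_adjacent_intervals i1 i2).symm
  -- facts about rpow
  have hP : s ^ α ≤ t ^ α := Real.rpow_le_rpow hs0 hst hα.le
  have hQ : t ^ α ≤ s ^ α + (t - s) ^ α := volterra_rpow_sub_le hs0 hst hα.le hα1.le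
  -- A-bound
  have hA : ‖(∫ τ in (0:ℝ)..s, (t - τ) ^ (α - 1) • g τ) -
      ∫ τ in (0:ℝ)..s, (s - τ) ^ (α - 1) • g τ‖ ≤ C * ((t - s) ^ α) / α := by
    rw [← intervalIntegral.integral_sub i1 i3]
    have hcong : (∫ τ in (0:ℝ)..s, ((t - τ) ^ (α - 1) • g τ - (s - τ) ^ (α - 1) • g τ)) =
        ∫ τ in (0:ℝ)..s, ((t - τ) ^ (α - 1) - (s - τ) ^ (α - 1)) • g τ := by
      apply intervalIntegral.integral_congr
      intro τ _
      simp only [sub_smul]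
    rw [hcong]
    have hbd : IntervalIntegrable
        (fun τ : ℝ => ((s - τ) ^ (α - 1) - (t - τ) ^ (α - 1)) * C) volume 0 s :=
      ((volterra_kernel_intervalIntegrable hα s 0 s).sub
        (volterra_kernel_intervalIntegrable hα t 0 s)).mul_const C
    have h := intervalIntegral.norm_integral_le_abs_of_norm_le (μ := volume)
      (f := fun τ => ((t - τ) ^ (α - 1) - (s - τ) ^ (α - 1)) • g τ)
      (g := fun τ => ((s - τ) ^ (α - 1) - (t - τ) ^ (α - 1)) * C) ?_ hbd
    · have hval : (∫ τ in (0:ℝ)..s, ((s - τ) ^ (α - 1) - (t - τ) ^ (α - 1)) * C) =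
          ((s ^ α - t ^ α + (t - s) ^ α) / α) * C := by
        rw [intervalIntegral.integral_mul_const,
          intervalIntegral.integral_sub (volterra_kernel_intervalIntegrable hα s 0 s)
            (volterra_kernel_intervalIntegrable hα t 0 s),
          volterra_kernel_integral hα, volterra_kernel_integral hα]
        rw [sub_zero, sub_zero, sub_self, Real.zero_rpow hα.ne']
        ring
      rw [hval] at h
      refine h.trans ?_
      rw [abs_of_nonneg (by
        apply mul_nonneg _ hC0
        apply div_nonneg _ hα.le
        linarith)]
      have hle1 : (s ^ α - t ^ α + (t - s) ^ α) / α ≤ (t - s) ^ α / α :=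
        (div_le_div_iff_of_pos_right hα).2 (by linarith)
      calc (s ^ α - t ^ α + (t - s) ^ α) / α * C ≤ (t - s) ^ α / α * C :=
            mul_le_mul_of_nonneg_right hle1 hC0
        _ = C * (t - s) ^ α / α := by ring
    · have hne : ∀ᵐ τ ∂(volume.restrict (Set.uIoc (0:ℝ) s)), τ ≠ s := by
        apply ae_restrict_of_ae
        have hset : {a : ℝ | ¬ a ≠ s} = {s} := by ext a; simp
        rw [MeasureTheory.ae_iff, hset]
        exact measure_singleton s
      filter_upwards [hae 0 s le_rfl (by linarith) hs0, ae_restrict_mem measurableSet_uIoc, hne]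
        with τ hτ hmem hτne
      rw [Set.uIoc_of_le hs0] at hmem
      have hlt : τ < s := lt_of_le_of_ne hmem.2 hτne
      have hst1 : (t - τ) ^ (α - 1) ≤ (s - τ) ^ (α - 1) := by
        apply Real.rpow_le_rpow_of_nonpos (by linarith : (0:ℝ) < s - τ)
          (by linarith) (by linarith)
      rw [norm_smul, Real.norm_eq_abs, abs_of_nonpos (by linarith), neg_sub]
      exact mul_le_mul_of_nonneg_left hτ (by linarith)
  -- B-bound
  have hB : ‖∫ τ in s..t, (t - τ) ^ (α - 1) • g τ‖ ≤ C * ((t - s) ^ α) / α := by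
    have := volterra_norm_integral_le hα hst le_rfl hs0 hC0 (hgm s t) (hae s t hs0 htT hst)
    rw [sub_self, Real.zero_rpow hα.ne', sub_zero] at this
    calc ‖∫ τ in s..t, (t - τ) ^ (α - 1) • g τ‖ ≤ C * ((t - s) ^ α / α) := this
      _ = C * (t - s) ^ α / α := by ring
  calc ‖(∫ τ in (0:ℝ)..t, (t - τ) ^ (α - 1) • g τ) -
        ∫ τ in (0:ℝ)..s, (s - τ) ^ (α - 1) • g τ‖
      = ‖((∫ τ in (0:ℝ)..s, (t - τ) ^ (α - 1) • g τ) -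
          ∫ τ in (0:ℝ)..s, (s - τ) ^ (α - 1) • g τ) +
          ∫ τ in s..t, (t - τ) ^ (α - 1) • g τ‖ := by rw [hsplit]; congr 1; abel
    _ ≤ ‖(∫ τ in (0:ℝ)..s, (t - τ) ^ (α - 1) • g τ) -
          ∫ τ in (0:ℝ)..s, (s - τ) ^ (α - 1) • g τ‖ +
          ‖∫ τ in s..t, (t - τ) ^ (α - 1) • g τ‖ := norm_add_le _ _
    _ ≤ C * ((t - s) ^ α) / α + C * ((t - s) ^ α) / α := add_le_add hA hB
    _ = (2 * C / α) * (t - s) ^ α := by ring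

lemma volterra_G_continuousOn {α : ℝ} (hα : 0 < α) (hα1 : α < 1) {g : ℝ → E} {T C : ℝ}
    (hg : StronglyMeasurable g)
    (hC : ∀ᵐ τ ∂(volume.restrict (Set.Icc (0:ℝ) T)), ‖g τ‖ ≤ C) (hC0 : 0 ≤ C) :
    ContinuousOn (fun t => ∫ τ in (0:ℝ)..t, (t - τ) ^ (α - 1) • g τ) (Set.Icc (0:ℝ) T) := by
  set G := fun t => ∫ τ in (0:ℝ)..t, (t - τ) ^ (α - 1) • g τ with hG
  have key : ∀ x ∈ Set.Icc (0:ℝ) T, ∀ y ∈ Set.Icc (0:ℝ) T,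
      dist (G y) (G x) ≤ (2 * C / α) * |y - x| ^ α := by
    intro x hx y hy
    rcases le_total x y with h | h
    · rw [dist_eq_norm, abs_of_nonneg (by linarith)]
      exact volterra_G_holder hα hα1 hg hC hC0 hx hy h
    · rw [dist_comm, dist_eq_norm, abs_of_nonpos (by linarith), neg_sub]
      exact volterra_G_holder hα hα1 hg hC hC0 hy hx h
  intro x hx
  have h0 : Filter.Tendsto (fun y => |y - x|) (nhdsWithin x (Set.Icc (0:ℝ) T)) (nhds 0) := by
    have hcont : Continuous fun y : ℝ => |y - x| := (continuous_id.sub continuous_const).abs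
    have := hcont.tendsto x
    simp only [sub_self, abs_zero] at this
    exact this.mono_left nhdsWithin_le_nhds
  have h1 : Filter.Tendsto (fun y => |y - x| ^ α) (nhdsWithin x (Set.Icc (0:ℝ) T)) (nhds 0) := by
    have hc := (Real.continuousAt_rpow_const 0 α (Or.inr hα.le)).tendsto
    have := hc.comp h0
    rwa [Real.zero_rpow hα.ne'] at this
  have h2 : Filter.Tendsto (fun y => (2 * C / α) * |y - x| ^ α)
      (nhdsWithin x (Set.Icc (0:ℝ) T)) (nhds 0) := by
    have := h1.const_mul (2 * C / α)
    rwa [mul_zero] at this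
  rw [ContinuousWithinAt, tendsto_iff_dist_tendsto_zero]
  apply squeeze_zero' (Filter.Eventually.of_forall fun y => dist_nonneg)
    (eventually_mem_nhdsWithin.mono fun y hy => key x hx y hy) h2

end Aux2


lemma volterra_matrix_apply_measurable {N : ℕ} {A : ℝ → Matrix (Fin N) (Fin N) ℝ}
    (hAmeas : Measurable fun (t : ℝ) (i j : Fin N) => A t i j)
    {h : ℝ → EuclideanSpace ℝ (Fin N)} (hh : Measurable h) :
    Measurable fun τ => (Matrix.toEuclideanCLM (𝕜 := ℝ) (A τ)) (h τ) := by
  have hpi : Measurable fun τ => (WithLp.equiv 2 (Fin N → ℝ)) (h τ) :=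
    ((PiLp.continuousLinearEquiv 2 ℝ (fun _ : Fin N => ℝ)).continuous.measurable).comp hh
  have hcoord : Measurable fun τ =>
      (Matrix.toLin' (A τ)) ((WithLp.equiv 2 (Fin N → ℝ)) (h τ)) := by
    simp only [Matrix.toLin'_apply]
    apply measurable_pi_lambda
    intro i
    show Measurable fun τ => ∑ j, A τ i j * (WithLp.equiv 2 (Fin N → ℝ)) (h τ) j
    apply Finset.measurable_sum
    intro j _
    exact (((measurable_pi_apply j).comp ((measurable_pi_apply i).comp hAmeas))).mul
      ((measurable_pi_apply j).comp hpi)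
  have heq : (fun τ => (Matrix.toEuclideanCLM (𝕜 := ℝ) (A τ)) (h τ)) =
      fun τ => (WithLp.equiv 2 (Fin N → ℝ)).symm
        ((Matrix.toLin' (A τ)) ((WithLp.equiv 2 (Fin N → ℝ)) (h τ))) := by
    funext τ
    rfl
  rw [heq]
  exact ((PiLp.continuousLinearEquiv 2 ℝ (fun _ : Fin N => ℝ)).symm.continuous.measurable).comp
    hcoord

lemma volterraRHS_congr {N : ℕ} (α : ℝ) (A : ℝ → Matrix (Fin N) (Fin N) ℝ)
    (F : ℝ → EuclideanSpace ℝ (Fin N)) {c₁ c₂ : ℝ → EuclideanSpace ℝ (Fin N)} {T t : ℝ}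
    (h : Set.EqOn c₁ c₂ (Set.Icc 0 T)) (ht : t ∈ Set.Icc (0:ℝ) T) :
    volterraRHS α A F c₁ t = volterraRHS α A F c₂ t := by
  have hint : (∫ τ in (0:ℝ)..t, ((t - τ) ^ (α - 1)) •
        (Matrix.toEuclideanCLM (𝕜 := ℝ) (A τ)) (c₁ τ)) =
      ∫ τ in (0:ℝ)..t, ((t - τ) ^ (α - 1)) • (Matrix.toEuclideanCLM (𝕜 := ℝ) (A τ)) (c₂ τ) := by
    apply intervalIntegral.integral_congr
    intro τ hτ
    rw [Set.uIcc_of_le ht.1] at hτ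
    simp only
    rw [h ⟨hτ.1, le_trans hτ.2 ht.2⟩]
  unfold volterraRHS
  rw [hint]


/-- If `0 < α < 1`, `A : [0,T] → M_N(ℝ)` is measurable and essentially bounded (in the
operator norm) and `F : [0,T] → ℝ^N` is measurable and essentially bounded, then the
Volterra integral equation
`c(t) = -(1/Γ(α)) ∫_0^t (t-τ)^(α-1) A(τ) c(τ) dτ + (1/Γ(α)) ∫_0^t (t-τ)^(α-1) F(τ) dτ`
has exactly one continuous solution `c : [0,T] → ℝ^N`. -/
theorem volterra_equation_existence_uniqueness
    (α T : ℝ) (hα : 0 < α) (hα1 : α < 1) (hT : 0 < T) (N : ℕ)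
    (A : ℝ → Matrix (Fin N) (Fin N) ℝ) (F : ℝ → EuclideanSpace ℝ (Fin N))
    (hAmeas : Measurable fun (t : ℝ) (i j : Fin N) => A t i j)
    (hAbdd : ∃ M : ℝ, ∀ᵐ t ∂(volume.restrict (Set.Icc (0 : ℝ) T)),
        ‖Matrix.toEuclideanCLM (𝕜 := ℝ) (A t)‖ ≤ M)
    (hFmeas : Measurable F)
    (hFbdd : ∃ M : ℝ, ∀ᵐ t ∂(volume.restrict (Set.Icc (0 : ℝ) T)), ‖F t‖ ≤ M) :
    ∃ c : ℝ → EuclideanSpace ℝ (Fin N),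
      (ContinuousOn c (Set.Icc 0 T) ∧ ∀ t ∈ Set.Icc (0 : ℝ) T, c t = volterraRHS α A F c t) ∧
      ∀ c' : ℝ → EuclideanSpace ℝ (Fin N),
        ContinuousOn c' (Set.Icc 0 T) → (∀ t ∈ Set.Icc (0 : ℝ) T, c' t = volterraRHS α A F c' t) →
        Set.EqOn c' c (Set.Icc 0 T) := by
  classical
  obtain ⟨M₀, hM₀⟩ := hAbdd
  obtain ⟨Mf₀, hMf₀⟩ := hFbdd
  set M : ℝ := max M₀ 0 with hMdef
  have hM : ∀ᵐ t ∂(volume.restrict (Set.Icc (0:ℝ) T)),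
      ‖Matrix.toEuclideanCLM (𝕜 := ℝ) (A t)‖ ≤ M :=
    hM₀.mono fun t h => le_trans h (le_max_left _ _)
  have hM0 : (0:ℝ) ≤ M := le_max_right _ _
  set Mf : ℝ := max Mf₀ 0 with hMfdef
  have hMf : ∀ᵐ t ∂(volume.restrict (Set.Icc (0:ℝ) T)), ‖F t‖ ≤ Mf :=
    hMf₀.mono fun t h => le_trans h (le_max_left _ _)
  have hMf0 : (0:ℝ) ≤ Mf := le_max_right _ _
  set l : ℝ := (2 * M + 1) ^ (α⁻¹) with hldef
  have hl : 0 < l := Real.rpow_pos_of_pos (by linarith) _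
  have hlα : l ^ α = 2 * M + 1 := by
    rw [hldef, ← Real.rpow_mul (by linarith), inv_mul_cancel₀ hα.ne', Real.rpow_one]
  have hΓ : 0 < Real.Gamma α := Real.Gamma_pos_of_pos hα
  set K : NNReal := ⟨M / (2 * M + 1), by positivity⟩ with hKdef
  have hKcoe : (K : ℝ) = M / (2 * M + 1) := rfl
  have hK1 : K < 1 := by
    rw [← NNReal.coe_lt_coe, hKcoe, NNReal.coe_one]
    rw [div_lt_one (by linarith)]
    linarith
  -- the space of continuous maps
  set X := C(Set.Icc (0:ℝ) T, EuclideanSpace ℝ (Fin N)) with hXdef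
  haveI : Nonempty X := ⟨ContinuousMap.const _ 0⟩
  -- weighted extension
  set w : X → ℝ → EuclideanSpace ℝ (Fin N) :=
    fun u t => Real.exp (l * t) • Set.IccExtend hT.le u t with hwdef
  have hwcont : ∀ u : X, Continuous (w u) := fun u =>
    (Real.continuous_exp.comp (continuous_const.mul continuous_id)).smul
      u.continuous.Icc_extend'
  have hwval : ∀ (u : X) (τ : ℝ) (hτ : τ ∈ Set.Icc (0:ℝ) T),
      w u τ = Real.exp (l * τ) • u ⟨τ, hτ⟩ := by
    intro u τ hτ
    rw [hwdef]
    simp only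
    rw [Set.IccExtend_of_mem hT.le u hτ]
  have hwnorm : ∀ (u : X) (τ : ℝ), τ ∈ Set.Icc (0:ℝ) T →
      ‖w u τ‖ ≤ Real.exp (l * T) * ‖u‖ := by
    intro u τ hτ
    rw [hwval u τ hτ, norm_smul, Real.norm_eq_abs, abs_of_pos (Real.exp_pos _)]
    apply mul_le_mul
    · exact Real.exp_le_exp.2 (mul_le_mul_of_nonneg_left hτ.2 hl.le)
    · exact u.norm_coe_le_norm _
    · exact norm_nonneg _
    · exact (Real.exp_pos _).le
  -- the Volterra operator composed with the weight
  set Tfun : X → ℝ → EuclideanSpace ℝ (Fin N) := fun u t => volterraRHS α A F (w u) t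
    with hTfundef
  have hgmeas : ∀ u : X,
      Measurable fun τ => (Matrix.toEuclideanCLM (𝕜 := ℝ) (A τ)) (w u τ) := fun u =>
    volterra_matrix_apply_measurable hAmeas (hwcont u).measurable
  have hgbdd : ∀ u : X, ∀ᵐ τ ∂(volume.restrict (Set.Icc (0:ℝ) T)),
      ‖(Matrix.toEuclideanCLM (𝕜 := ℝ) (A τ)) (w u τ)‖ ≤ M * (Real.exp (l * T) * ‖u‖) := by
    intro u
    filter_upwards [hM, ae_restrict_mem measurableSet_Icc] with τ h1 h2
    calc ‖(Matrix.toEuclideanCLM (𝕜 := ℝ) (A τ)) (w u τ)‖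
        ≤ ‖Matrix.toEuclideanCLM (𝕜 := ℝ) (A τ)‖ * ‖w u τ‖ :=
          ContinuousLinearMap.le_opNorm _ _
      _ ≤ M * (Real.exp (l * T) * ‖u‖) :=
          mul_le_mul h1 (hwnorm u τ h2) (norm_nonneg _) hM0
  have hTcont : ∀ u : X, ContinuousOn (Tfun u) (Set.Icc (0:ℝ) T) := by
    intro u
    rw [hTfundef]
    show ContinuousOn (fun t => volterraRHS α A F (w u) t) _
    unfold volterraRHS
    apply ContinuousOn.add
    · exact (volterra_G_continuousOn hα hα1 (hgmeas u).stronglyMeasurable (hgbdd u)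
        (by positivity)).const_smul (-(1 / Real.Gamma α))
    · exact (volterra_G_continuousOn hα hα1 hFmeas.stronglyMeasurable hMf hMf0).const_smul (1 / Real.Gamma α)
  -- the contraction map
  set S : X → X := fun u =>
    ⟨fun s => Real.exp (-(l * (s : ℝ))) • Tfun u (s : ℝ), by
      exact (Real.continuous_exp.comp (continuous_const.mul continuous_subtype_val).neg).smul
        ((hTcont u).restrict)⟩ with hSdef
  have hSval : ∀ (u : X) (s : Set.Icc (0:ℝ) T),
      S u s = Real.exp (-(l * (s : ℝ))) • Tfun u (s : ℝ) := fun u s => rfl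
  -- integrability of the integrands on subintervals of [0, T]
  have hsubae : ∀ s : ℝ, s ∈ Set.Icc (0:ℝ) T →
      ∀ {p : ℝ → Prop}, (∀ᵐ τ ∂(volume.restrict (Set.Icc (0:ℝ) T)), p τ) →
        (∀ᵐ τ ∂(volume.restrict (Set.uIoc (0:ℝ) s)), p τ) := by
    intro s hs p hp
    refine hp.filter_mono (ae_mono (Measure.restrict_mono ?_ le_rfl))
    rw [Set.uIoc_of_le hs.1]
    exact fun x hx => ⟨hx.1.le, le_trans hx.2 hs.2⟩
  have hint : ∀ (u : X) (s : ℝ), s ∈ Set.Icc (0:ℝ) T →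
      IntervalIntegrable
        (fun τ => ((s - τ) ^ (α - 1)) • (Matrix.toEuclideanCLM (𝕜 := ℝ) (A τ)) (w u τ))
        volume 0 s := by
    intro u s hs
    exact volterra_integrand_integrable hα s
      ((hgmeas u).stronglyMeasurable.aestronglyMeasurable.restrict)
      (hsubae s hs (hgbdd u))
  -- Lipschitz estimate
  have hlip : LipschitzWith K S := by
    apply LipschitzWith.of_dist_le_mul
    intro u v
    rw [ContinuousMap.dist_le (by positivity)]
    intro x
    set s : ℝ := (x : ℝ) with hsdef
    have hsmem : s ∈ Set.Icc (0:ℝ) T := x.2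
    set D : ℝ := dist u v with hDdef
    have hD0 : (0:ℝ) ≤ D := dist_nonneg
    -- pointwise difference
    have hdiff : S u x - S v x = Real.exp (-(l * s)) • ((-(1 / Real.Gamma α)) •
        ∫ τ in (0:ℝ)..s, ((s - τ) ^ (α - 1)) •
          ((Matrix.toEuclideanCLM (𝕜 := ℝ) (A τ)) (w u τ - w v τ))) := by
      rw [hSval, hSval, ← smul_sub]
      congr 1
      show volterraRHS α A F (w u) s - volterraRHS α A F (w v) s = _
      unfold volterraRHS
      rw [show ∀ a b c : EuclideanSpace ℝ (Fin N), (a + c) - (b + c) = a - b from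
        fun a b c => by abel]
      rw [← smul_sub]
      congr 1
      rw [← intervalIntegral.integral_sub (hint u s hsmem) (hint v s hsmem)]
      apply intervalIntegral.integral_congr
      intro τ _
      simp only [← smul_sub, ← map_sub]
    rw [dist_eq_norm, hdiff]
    rw [norm_smul, norm_smul, Real.norm_eq_abs, abs_of_pos (Real.exp_pos _),
      Real.norm_eq_abs, abs_neg, abs_of_pos (by positivity : 0 < 1 / Real.Gamma α)]
    -- bound the integral
    have hbd : IntervalIntegrable
        (fun τ : ℝ => ((s - τ) ^ (α - 1) * Real.exp (l * τ)) * (M * D)) volume 0 s := by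
      apply IntervalIntegrable.mul_const
      apply (volterra_kernel_intervalIntegrable hα s 0 s).mul_continuousOn
      exact (Real.continuous_exp.comp (continuous_const.mul continuous_id)).continuousOn
    have hnorm : ‖∫ τ in (0:ℝ)..s, ((s - τ) ^ (α - 1)) •
        ((Matrix.toEuclideanCLM (𝕜 := ℝ) (A τ)) (w u τ - w v τ))‖ ≤
        ∫ τ in (0:ℝ)..s, ((s - τ) ^ (α - 1) * Real.exp (l * τ)) * (M * D) := by
      have h := intervalIntegral.norm_integral_le_abs_of_norm_le (μ := volume)
        (f := fun τ => ((s - τ) ^ (α - 1)) •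
          ((Matrix.toEuclideanCLM (𝕜 := ℝ) (A τ)) (w u τ - w v τ)))
        (g := fun τ => ((s - τ) ^ (α - 1) * Real.exp (l * τ)) * (M * D)) ?_ hbd
      · refine h.trans (le_of_eq (abs_of_nonneg ?_))
        apply intervalIntegral.integral_nonneg hsmem.1
        intro τ hτ
        have : (0:ℝ) ≤ (s - τ) ^ (α - 1) := Real.rpow_nonneg (by linarith [hτ.2]) _
        positivity
      · filter_upwards [hsubae s hsmem hM, ae_restrict_mem measurableSet_uIoc]
          with τ hτM hτmem
        rw [Set.uIoc_of_le hsmem.1] at hτmem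
        have hτI : τ ∈ Set.Icc (0:ℝ) T := ⟨hτmem.1.le, le_trans hτmem.2 hsmem.2⟩
        have hk0 : (0:ℝ) ≤ (s - τ) ^ (α - 1) := Real.rpow_nonneg (by linarith [hτmem.2]) _
        rw [norm_smul, Real.norm_eq_abs, abs_of_nonneg hk0, mul_assoc]
        apply mul_le_mul_of_nonneg_left _ hk0
        have hwsub : w u τ - w v τ = Real.exp (l * τ) • ((u ⟨τ, hτI⟩ : EuclideanSpace ℝ (Fin N))
            - v ⟨τ, hτI⟩) := by
          rw [hwval u τ hτI, hwval v τ hτI, smul_sub]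
        calc ‖(Matrix.toEuclideanCLM (𝕜 := ℝ) (A τ)) (w u τ - w v τ)‖
            ≤ ‖Matrix.toEuclideanCLM (𝕜 := ℝ) (A τ)‖ * ‖w u τ - w v τ‖ :=
              ContinuousLinearMap.le_opNorm _ _
          _ ≤ M * (Real.exp (l * τ) * D) := by
              apply mul_le_mul hτM _ (norm_nonneg _) hM0
              rw [hwsub, norm_smul, Real.norm_eq_abs, abs_of_pos (Real.exp_pos _)]
              apply mul_le_mul_of_nonneg_left _ (Real.exp_pos _).le
              rw [← dist_eq_norm]
              exact ContinuousMap.dist_apply_le_dist _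
          _ = Real.exp (l * τ) * (M * D) := by ring
    have hintval : (∫ τ in (0:ℝ)..s, ((s - τ) ^ (α - 1) * Real.exp (l * τ)) * (M * D)) ≤
        (Real.exp (l * s) * (Real.Gamma α / l ^ α)) * (M * D) := by
      rw [intervalIntegral.integral_mul_const]
      exact mul_le_mul_of_nonneg_right
        (volterra_exp_integral_le hα hα1 hl hsmem.1) (by positivity)
    calc Real.exp (-(l * s)) * (1 / Real.Gamma α *
          ‖∫ τ in (0:ℝ)..s, ((s - τ) ^ (α - 1)) •
            ((Matrix.toEuclideanCLM (𝕜 := ℝ) (A τ)) (w u τ - w v τ))‖)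
        ≤ Real.exp (-(l * s)) * (1 / Real.Gamma α *
            ((Real.exp (l * s) * (Real.Gamma α / l ^ α)) * (M * D))) := by
          apply mul_le_mul_of_nonneg_left _ (Real.exp_pos _).le
          exact mul_le_mul_of_nonneg_left (hnorm.trans hintval) (by positivity)
      _ = (M / l ^ α) * D := by
          rw [Real.exp_neg]
          field_simp
      _ = (K : ℝ) * D := by rw [hKcoe, hlα]
  have hcontr : ContractingWith K S := ⟨hK1, hlip⟩
  set x : X := ContractingWith.fixedPoint S hcontr with hxdef
  have hxfix : Function.IsFixedPt S x := ContractingWith.fixedPoint_isFixedPt hcontr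
  refine ⟨w x, ⟨(hwcont x).continuousOn, ?_⟩, ?_⟩
  · -- (w x) solves the equation
    intro t ht
    have h1 : x ⟨t, ht⟩ = Real.exp (-(l * t)) • Tfun x t := by
      conv_lhs => rw [← hxfix]
      rfl
    rw [hwval x t ht, h1, smul_smul, ← Real.exp_add]
    rw [show l * t + -(l * t) = 0 by ring, Real.exp_zero, one_smul]
  · -- uniqueness
    intro c' hc'cont hc'eq
    set u' : X := ⟨fun s => Real.exp (-(l * (s : ℝ))) • c' (s : ℝ), by
      exact (Real.continuous_exp.comp
        (continuous_const.mul continuous_subtype_val).neg).smul hc'cont.restrict⟩ with hu'def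
    have hu'val : ∀ s : Set.Icc (0:ℝ) T,
        u' s = Real.exp (-(l * (s : ℝ))) • c' (s : ℝ) := fun s => rfl
    have hwu' : Set.EqOn (w u') c' (Set.Icc (0:ℝ) T) := by
      intro τ hτ
      rw [hwval u' τ hτ, hu'val ⟨τ, hτ⟩, smul_smul, ← Real.exp_add]
      simp only
      rw [show l * τ + -(l * τ) = 0 by ring, Real.exp_zero, one_smul]
    have hu'fix : Function.IsFixedPt S u' := by
      apply ContinuousMap.ext
      intro s
      rw [hSval]
      have : Tfun u' (s : ℝ) = c' (s : ℝ) := by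
        rw [hTfundef]
        show volterraRHS α A F (w u') (s : ℝ) = c' (s : ℝ)
        rw [volterraRHS_congr α A F hwu' s.2]
        exact (hc'eq (s : ℝ) s.2).symm
      rw [this, hu'val]
    have hu'x : u' = x := ContractingWith.fixedPoint_unique hcontr hu'fix
    intro t ht
    have : c' t = Real.exp (l * t) • u' ⟨t, ht⟩ := by
      rw [hu'val ⟨t, ht⟩, smul_smul, ← Real.exp_add]
      simp only
      rw [show l * t + -(l * t) = 0 by ring, Real.exp_zero, one_smul]
    rw [this, hu'x, ← hwval x t ht]
end

section
/- Let 0 < α < 1, λ > 0, and define s(t) := E_α(-λ t^α) for t ≥ 0, where E_α(z) := ∑_{n=0}^∞ zⁿ/Γ(αn+1) is the Mittag–Leffler function, and l(t) := t^{α-1}/Γ(α) for t > 0. Then s is the solution of the integral equation s(t) + λ (l ∗ s)(t) = 1 for all t > 0, where (l ∗ s)(t) := ∫₀^t l(t-τ) s(τ) dτ. -/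
open Real MeasureTheory Filter intervalIntegral


lemma gamma_lb {α : ℝ} (hα : 0 < α) (hα1 : α < 1) {y : ℝ} (hy : 0 < y) :
    y * Real.Gamma y ≤ Real.Gamma (y + α) * (y + α) ^ (1 - α) := by
  have hyα : 0 < y + α := by linarith
  have h := Real.Gamma_mul_add_mul_le_rpow_Gamma_mul_rpow_Gamma (s := y + α) (t := y + α + 1)
    hyα (by linarith) (a := α) (b := 1 - α) hα (by linarith) (by ring)
  have harg : α * (y + α) + (1 - α) * (y + α + 1) = y + 1 := by ring
  rw [harg, Real.Gamma_add_one hy.ne', Real.Gamma_add_one hyα.ne',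
    Real.mul_rpow hyα.le (Real.Gamma_pos_of_pos hyα).le, ← mul_assoc,
    mul_comm (Real.Gamma (y+α) ^ α), mul_assoc,
    ← Real.rpow_add (Real.Gamma_pos_of_pos hyα)] at h
  simpa [mul_comm] using h

lemma gamma_lb' {α : ℝ} (hα : 0 < α) (hα1 : α < 1) {y : ℝ} (hy : α ≤ y) :
    (1 / 2) * (y + α) ^ α * Real.Gamma y ≤ Real.Gamma (y + α) := by
  have hy0 : 0 < y := lt_of_lt_of_le hα hy
  have hyα : 0 < y + α := by linarith
  have h1 := gamma_lb hα hα1 hy0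
  have hpow : 0 < (y + α) ^ (1 - α) := Real.rpow_pos_of_pos hyα _
  have key : (1 / 2) * (y + α) ^ α * (y + α) ^ (1 - α) ≤ y := by
    rw [mul_assoc, ← Real.rpow_add hyα]
    norm_num
    linarith
  calc (1 / 2) * (y + α) ^ α * Real.Gamma y
      = ((1 / 2) * (y + α) ^ α * (y + α) ^ (1 - α)) * Real.Gamma y / (y + α) ^ (1 - α) := by
        field_simp
    _ ≤ y * Real.Gamma y / (y + α) ^ (1 - α) := by
        gcongr ?_ / _
        exact mul_le_mul_of_nonneg_right key (Real.Gamma_pos_of_pos hy0).le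
    _ ≤ Real.Gamma (y + α) := by
        rw [div_le_iff₀ hpow]; exact h1

lemma summable_ml {α c : ℝ} (hα : 0 < α) (hα1 : α < 1) (hc : 0 < c) {x : ℝ} (hx : 0 ≤ x) :
    Summable (fun n : ℕ => x ^ n / Real.Gamma (α * n + c)) := by
  rcases hx.eq_or_lt with rfl | hx
  · apply summable_of_ne_finset_zero (s := {0})
    intro n hn
    simp only [Finset.mem_singleton] at hn
    simp [zero_pow hn]
  apply summable_of_ratio_norm_eventually_le (r := 1 / 2) (by norm_num)
  have hinner : Tendsto (fun n : ℕ => α * n + c + α) atTop atTop := by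
    apply tendsto_atTop_add_const_right
    apply tendsto_atTop_add_const_right
    exact Tendsto.const_mul_atTop hα tendsto_natCast_atTop_atTop
  have key : Tendsto (fun n : ℕ => (α * n + c + α) ^ α) atTop atTop :=
    (tendsto_rpow_atTop hα).comp hinner
  filter_upwards [key.eventually_ge_atTop (4 * x), eventually_ge_atTop 1] with n h4 hn1
  have hn1' : (1 : ℝ) ≤ (n : ℝ) := by exact_mod_cast hn1
  set y : ℝ := α * n + c with hy
  have hy0 : 0 < y := by positivity
  have hyα : 0 < y + α := by positivity
  have hcast : α * ((n : ℕ) + 1 : ℕ) + c = y + α := by push_cast; ring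
  have hga : α ≤ y := by nlinarith
  have hG := gamma_lb' hα hα1 hga
  have h2x : 2 * x * Real.Gamma y ≤ Real.Gamma (y + α) := by
    have : 2 * x ≤ (1 / 2) * (y + α) ^ α := by linarith
    calc 2 * x * Real.Gamma y ≤ (1 / 2) * (y + α) ^ α * Real.Gamma y :=
          mul_le_mul_of_nonneg_right this (Real.Gamma_pos_of_pos hy0).le
      _ ≤ _ := hG
  have hGy := Real.Gamma_pos_of_pos hy0
  have hGyα := Real.Gamma_pos_of_pos hyα
  rw [hcast]
  rw [Real.norm_eq_abs, Real.norm_eq_abs, abs_div, abs_div, abs_pow, abs_pow,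
    abs_of_pos hx, abs_of_pos hGy, abs_of_pos hGyα]
  rw [div_le_iff₀ hGyα, pow_succ]
  calc x ^ n * x = (1 / 2) * (x ^ n / Real.Gamma y) * (2 * x * Real.Gamma y) := by
        field_simp
    _ ≤ (1 / 2) * (x ^ n / Real.Gamma y) * Real.Gamma (y + α) := by
        apply mul_le_mul_of_nonneg_left h2x; positivity
    _ = 1 / 2 * (x ^ n / Real.Gamma y) * Real.Gamma (y + α) := rfl


lemma real_beta {a b : ℝ} (ha : 0 < a) (hb : 0 < b) :
    ∫ x in (0:ℝ)..1, x ^ (a - 1) * (1 - x) ^ (b - 1) =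
      Real.Gamma a * Real.Gamma b / Real.Gamma (a + b) := by
  have hab : 0 < a + b := by linarith
  have hcv : Complex.betaIntegral a b =
      ((∫ x in (0:ℝ)..1, x ^ (a - 1) * (1 - x) ^ (b - 1) : ℝ) : ℂ) := by
    rw [Complex.betaIntegral, ← intervalIntegral.integral_ofReal]
    apply intervalIntegral.integral_congr
    intro x hx
    rw [Set.uIcc_of_le (by norm_num : (0:ℝ) ≤ 1)] at hx
    simp only [Complex.ofReal_mul, Complex.ofReal_cpow hx.1,
      Complex.ofReal_cpow (sub_nonneg.2 hx.2), Complex.ofReal_sub, Complex.ofReal_one]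
  have hg := Complex.Gamma_mul_Gamma_eq_betaIntegral
    (s := (a : ℂ)) (t := (b : ℂ)) (by simpa using ha) (by simpa using hb)
  rw [hcv, Complex.Gamma_ofReal, Complex.Gamma_ofReal, ← Complex.ofReal_add,
    Complex.Gamma_ofReal, ← Complex.ofReal_mul, ← Complex.ofReal_mul] at hg
  have := Complex.ofReal_injective hg
  rw [eq_div_iff (Real.Gamma_pos_of_pos hab).ne']
  linarith [this]

lemma conv_rpow_integral {a b t : ℝ} (ha : 0 < a) (hb : 0 < b) (ht : 0 < t) :
    ∫ τ in (0:ℝ)..t, (t - τ) ^ (a - 1) * τ ^ (b - 1) =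
      Real.Gamma a * Real.Gamma b / Real.Gamma (a + b) * t ^ (a + b - 1) := by
  have key := intervalIntegral.integral_comp_mul_right
    (f := fun τ : ℝ => (t - τ) ^ (a - 1) * τ ^ (b - 1)) (a := 0) (b := 1) ht.ne'
  simp only [zero_mul, one_mul, smul_eq_mul] at key
  have heq : ∫ x in (0:ℝ)..1, (t - x * t) ^ (a - 1) * (x * t) ^ (b - 1)
      = t ^ (a - 1) * t ^ (b - 1) *
        ∫ x in (0:ℝ)..1, x ^ (b - 1) * (1 - x) ^ (a - 1) := by
    rw [← intervalIntegral.integral_const_mul]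
    apply intervalIntegral.integral_congr
    intro x hx
    rw [Set.uIcc_of_le (by norm_num : (0:ℝ) ≤ 1)] at hx
    have h1 : t - x * t = (1 - x) * t := by ring
    dsimp only
    rw [h1, Real.mul_rpow (by linarith [hx.2]) ht.le, Real.mul_rpow hx.1 ht.le]
    ring
  rw [heq, real_beta hb ha] at key
  have : (∫ τ in (0:ℝ)..t, (t - τ) ^ (a - 1) * τ ^ (b - 1)) = t * (t⁻¹ * ∫ τ in (0:ℝ)..t, (t - τ) ^ (a - 1) * τ ^ (b - 1)) := by
    field_simp
  rw [this, ← key]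
  rw [show Real.Gamma b * Real.Gamma a / Real.Gamma (b + a) = Real.Gamma a * Real.Gamma b / Real.Gamma (a + b) by rw [mul_comm, add_comm]]
  rw [show t * (t ^ (a - 1) * t ^ (b - 1) * (Real.Gamma a * Real.Gamma b / Real.Gamma (a + b)))
      = (t * (t ^ (a - 1) * t ^ (b - 1))) * (Real.Gamma a * Real.Gamma b / Real.Gamma (a + b)) by ring]
  have htt : t * (t ^ (a - 1) * t ^ (b - 1)) = t ^ (a + b - 1) := by
    nth_rewrite 1 [← Real.rpow_one t]
    rw [← Real.rpow_add ht, ← Real.rpow_add ht]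
    congr 1; ring
  rw [htt, mul_comm]

lemma integrable_conv {a c t : ℝ} (ha : 0 < a) (ha1 : a < 1) (hc : 0 ≤ c) (ht : 0 < t) :
    IntervalIntegrable (fun τ => (t - τ) ^ (a - 1) * τ ^ c) volume 0 t := by
  have h1 : IntervalIntegrable (fun τ : ℝ => (t - τ) ^ (a - 1)) volume 0 t := by
    have h0 : IntervalIntegrable (fun x : ℝ => x ^ (a - 1)) volume 0 t :=
      intervalIntegrable_rpow' (by linarith)
    simpa using (h0.comp_sub_left t).symm
  apply h1.mul_continuousOn
  exact (Real.continuous_rpow_const hc).continuousOn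




/-- The one-parameter Mittag–Leffler function `E_α(z) = ∑_{n=0}^∞ zⁿ/Γ(αn+1)`. -/
noncomputable def mittagLeffler (α z : ℝ) : ℝ :=
  ∑' n : ℕ, z ^ n / Real.Gamma (α * n + 1)

/-- For `0 < α < 1` and `λ > 0`, the function `s(t) = E_α(-λ t^α)` solves the integral
equation `s(t) + λ (l ∗ s)(t) = 1` for all `t > 0`, where `l(t) = t^(α-1)/Γ(α)` and
`(l ∗ s)(t) = ∫_0^t l(t-τ) s(τ) dτ`. -/
theorem mittagLeffler_solves_integral_equation (α lam : ℝ) (hα : 0 < α) (hα1 : α < 1)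
    (hlam : 0 < lam) :
    ∀ t : ℝ, 0 < t →
      mittagLeffler α (-lam * t ^ α)
        + lam * ∫ τ in (0 : ℝ)..t,
            ((t - τ) ^ (α - 1) / Real.Gamma α) * mittagLeffler α (-lam * τ ^ α) = 1 := by
  intro t ht
  have hΓα : 0 < Real.Gamma α := Real.Gamma_pos_of_pos hα
  have htα : (0:ℝ) < t ^ α := Real.rpow_pos_of_pos ht α
  have hxt : (0:ℝ) ≤ lam * t ^ α := by positivity
  have hΓn : ∀ n : ℕ, 0 < Real.Gamma (α * n + 1) := fun n =>
    Real.Gamma_pos_of_pos (by positivity)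
  have hΓn' : ∀ n : ℕ, 0 < Real.Gamma (α * n + 1 + α) := fun n =>
    Real.Gamma_pos_of_pos (by positivity)
  -- the ML series at -lam t^α
  set a : ℕ → ℝ := fun n => (-lam * t ^ α) ^ n / Real.Gamma (α * n + 1) with ha
  have hsuma : Summable a := by
    apply Summable.of_abs
    have : (fun n => |a n|) = fun n : ℕ => (lam * t ^ α) ^ n / Real.Gamma (α * n + 1) := by
      funext n
      rw [ha]
      rw [abs_div, abs_pow, abs_of_pos (hΓn n), abs_mul, abs_neg, abs_of_pos hlam,
        abs_of_pos htα]
    rw [this]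
    exact summable_ml hα hα1 one_pos hxt
  -- the integrand functions
  set F : ℕ → ℝ → ℝ := fun n τ =>
    ((t - τ) ^ (α - 1) / Real.Gamma α) * ((-lam * τ ^ α) ^ n / Real.Gamma (α * n + 1)) with hF
  set C : ℕ → ℝ := fun n => (-lam) ^ n / (Real.Gamma α * Real.Gamma (α * n + 1)) with hC
  set g : ℕ → ℝ → ℝ := fun n τ => (t - τ) ^ (α - 1) * τ ^ (α * (n:ℝ)) with hg
  have hFg : ∀ n : ℕ, ∀ τ ∈ Set.Ioc (0:ℝ) t, F n τ = C n * g n τ := by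
    intro n τ hτ
    have h1 : (τ ^ α) ^ n = τ ^ (α * (n:ℝ)) := by
      rw [← Real.rpow_natCast (τ ^ α) n, ← Real.rpow_mul hτ.1.le]
    rw [hF, hC, hg]
    dsimp only
    rw [mul_pow, h1]
    field_simp
  -- integral of g n
  have hint : ∀ n : ℕ, ∫ τ in (0:ℝ)..t, g n τ
      = Real.Gamma α * Real.Gamma (α * n + 1) / Real.Gamma (α * n + 1 + α)
        * t ^ (α * n + α) := by
    intro n
    have hb : (0:ℝ) < α * n + 1 := by positivity
    have h := conv_rpow_integral hα hb ht
    rw [hg]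
    simp only [add_sub_cancel_right] at h
    rw [h, show α + (α * (n:ℝ) + 1) = α * n + 1 + α by ring,
      show α * (n:ℝ) + 1 + α - 1 = α * n + α by ring]
  -- integrability
  have hg_int : ∀ n : ℕ, IntervalIntegrable (g n) volume 0 t := fun n =>
    integrable_conv hα hα1 (by positivity) ht
  have hFint : ∀ n : ℕ, IntegrableOn (F n) (Set.Ioc 0 t) volume := by
    intro n
    have h1 : IntervalIntegrable (fun τ => C n * g n τ) volume 0 t := (hg_int n).const_mul _
    rw [intervalIntegrable_iff_integrableOn_Ioc_of_le ht.le] at h1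
    exact h1.congr_fun (fun τ hτ => (hFg n τ hτ).symm) measurableSet_Ioc
  -- norm integrals
  have hgnn : ∀ n : ℕ, ∀ τ ∈ Set.Ioc (0:ℝ) t, 0 ≤ g n τ := by
    intro n τ hτ
    rw [hg]
    exact mul_nonneg (Real.rpow_nonneg (by linarith [hτ.2]) _) (Real.rpow_nonneg hτ.1.le _)
  have hnorm : ∀ n : ℕ, ∫ τ in Set.Ioc (0:ℝ) t, ‖F n τ‖
      = t ^ α * ((lam * t ^ α) ^ n / Real.Gamma (α * n + (1 + α))) := by
    intro n
    have step1 : ∫ τ in Set.Ioc (0:ℝ) t, ‖F n τ‖ = ∫ τ in Set.Ioc (0:ℝ) t, |C n| * g n τ := by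
      apply setIntegral_congr_fun measurableSet_Ioc
      intro τ hτ
      dsimp only
      rw [Real.norm_eq_abs, hFg n τ hτ, abs_mul, abs_of_nonneg (hgnn n τ hτ)]
    rw [step1, MeasureTheory.integral_const_mul, ← intervalIntegral.integral_of_le ht.le,
      hint n]
    have hCabs : |C n| = lam ^ n / (Real.Gamma α * Real.Gamma (α * n + 1)) := by
      rw [hC]
      rw [abs_div, abs_pow, abs_neg, abs_of_pos hlam,
        abs_of_pos (mul_pos hΓα (hΓn n))]
    rw [hCabs]
    have htn : t ^ (α * n + α) = (t ^ α) ^ n * t ^ α := by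
      rw [← Real.rpow_natCast (t ^ α) n, ← Real.rpow_mul ht.le, ← Real.rpow_add ht,
        mul_comm α (n:ℝ)]
    rw [htn, show α * n + 1 + α = α * n + (1 + α) by ring, mul_pow]
    field_simp
  have hsumnorm : Summable fun n : ℕ => ∫ τ in Set.Ioc (0:ℝ) t, ‖F n τ‖ := by
    rw [show (fun n : ℕ => ∫ τ in Set.Ioc (0:ℝ) t, ‖F n τ‖)
        = fun n : ℕ => t ^ α * ((lam * t ^ α) ^ n / Real.Gamma (α * n + (1 + α))) from
      funext hnorm]
    exact (summable_ml hα hα1 (by linarith) hxt).mul_left _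
  -- swap integral and sum
  have hswap : (∫ τ in (0:ℝ)..t,
        ((t - τ) ^ (α - 1) / Real.Gamma α) * mittagLeffler α (-lam * τ ^ α))
      = ∑' n : ℕ, ∫ τ in Set.Ioc (0:ℝ) t, F n τ := by
    rw [intervalIntegral.integral_of_le ht.le]
    rw [show (fun τ => ((t - τ) ^ (α - 1) / Real.Gamma α) * mittagLeffler α (-lam * τ ^ α))
        = fun τ => ∑' n : ℕ, F n τ from funext fun τ => by
      rw [mittagLeffler, hF, tsum_mul_left]]
    exact (MeasureTheory.integral_tsum_of_summable_integral_norm hFint hsumnorm).symm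
  -- value of each integral
  have hval : ∀ n : ℕ, ∫ τ in Set.Ioc (0:ℝ) t, F n τ
      = (-lam) ^ n * t ^ (α * n + α) / Real.Gamma (α * n + 1 + α) := by
    intro n
    rw [setIntegral_congr_fun measurableSet_Ioc (hFg n),
      MeasureTheory.integral_const_mul, ← intervalIntegral.integral_of_le ht.le, hint n, hC]
    field_simp
  -- final computation
  have hterm : ∀ n : ℕ, lam * ((-lam) ^ n * t ^ (α * n + α) / Real.Gamma (α * n + 1 + α))
      = -(a (n + 1)) := by
    intro n
    have htp : ((t ^ α) ^ (n + 1) : ℝ) = t ^ (α * n + α) := by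
      rw [← Real.rpow_natCast (t ^ α) (n + 1), ← Real.rpow_mul ht.le]
      congr 1
      push_cast
      ring
    simp only [ha]
    rw [mul_pow, htp]
    push_cast
    rw [show α * ((n:ℝ) + 1) + 1 = α * n + 1 + α by ring]
    field_simp
    ring
  rw [hswap]
  have hml : mittagLeffler α (-lam * t ^ α) = ∑' n, a n := by rw [mittagLeffler, ha]
  rw [hml]
  rw [show (fun n : ℕ => ∫ τ in Set.Ioc (0:ℝ) t, F n τ)
      = fun n : ℕ => (-lam) ^ n * t ^ (α * n + α) / Real.Gamma (α * n + 1 + α) from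
    funext hval]
  rw [← tsum_mul_left]
  rw [show (fun n : ℕ => lam * ((-lam) ^ n * t ^ (α * n + α) / Real.Gamma (α * n + 1 + α)))
      = fun n : ℕ => -(a (n + 1)) from funext hterm]
  rw [tsum_neg, Summable.tsum_eq_zero_add hsuma]
  have ha0 : a 0 = 1 := by
    rw [ha]; simp [Real.Gamma_one]
  rw [ha0]
  ring
end

section
/- Let 0 < α < 1, T > 0, C ≥ 0, and let v ∈ L^1([0,T];ℝ) satisfy v(t) ≥ 0 for almost every t ∈ (0,T) and v(t) ≤ C ∫₀^t (t-s)^{α-1} v(s) ds for almost every t ∈ (0,T). Then v(t) = 0 for almost every t ∈ (0,T). -/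
open MeasureTheory

open Set in
open scoped ENNReal in

lemma gronwall_step (α T C δ : ℝ) (hα : 0 < α) (hα1 : α < 1) (hT : 0 < T)
    (hC : 0 ≤ C) (hδ : 0 < δ) (hδC : C * (δ ^ α / α) ≤ 1/2)
    (w : ℝ → ℝ) (hwm : Measurable w)
    (hwint : IntegrableOn w (Icc 0 T) volume)
    (hw0 : ∀ᵐ t ∂(volume.restrict (Ioo (0:ℝ) T)), 0 ≤ w t)
    (hineq : ∀ᵐ t ∂(volume.restrict (Ioo (0:ℝ) T)),
        w t ≤ C * ∫ s in (0:ℝ)..t, (t - s) ^ (α - 1) * w s)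
    (a : ℝ) (ha : 0 ≤ a)
    (IH : ∀ᵐ s ∂(volume.restrict (Ioo (0:ℝ) (min a T))), w s = 0) :
    ∀ᵐ s ∂(volume.restrict (Ioo (0:ℝ) (min (a + δ) T))), w s = 0 := by
  rcases le_or_gt T a with hTa | haT
  · have : min (a + δ) T = min a T := by
      rw [min_eq_right hTa, min_eq_right (by linarith)]
    rw [this]; exact IH
  -- now a < T
  rw [min_eq_left haT.le] at IH
  set b := min (a + δ) T with hb
  have hab : a < b := lt_min (by linarith) haT
  have hbT : b ≤ T := min_le_right _ _
  have hbδ : b ≤ a + δ := min_le_left _ _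
  have hsub : Ioo a b ⊆ Ioo 0 T := fun x hx => ⟨lt_of_le_of_lt ha hx.1, lt_of_lt_of_le hx.2 hbT⟩
  -- the main claim on (a, b)
  have ae0 : ∀ᵐ s ∂(volume.restrict (Ioo a b)), w s = 0 := by
    set g : ℝ → ℝ≥0∞ := fun s => ENNReal.ofReal (w s) with hg
    set F : ℝ → ℝ → ℝ≥0∞ := fun t s =>
      (Ioc a t).indicator (fun s => ENNReal.ofReal ((t - s) ^ (α - 1)) * g s) s with hF
    set I : ℝ≥0∞ := ∫⁻ s in Ioo a b, g s with hI
    -- measurability of uncurry F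
    have hFm : Measurable (Function.uncurry F) := by
      have : Function.uncurry F = Set.indicator {q : ℝ × ℝ | a < q.2 ∧ q.2 ≤ q.1}
          (fun q => ENNReal.ofReal ((q.1 - q.2) ^ (α - 1)) * g q.2) := by
        ext p
        by_cases hp : p.2 ∈ Ioc a p.1
        · simp [Function.uncurry, F, Set.indicator_of_mem hp,
            Set.indicator_of_mem (show p ∈ {q : ℝ × ℝ | a < q.2 ∧ q.2 ≤ q.1} from hp)]
        · simp [Function.uncurry, F, Set.indicator_of_notMem hp,
            Set.indicator_of_notMem (show p ∉ {q : ℝ × ℝ | a < q.2 ∧ q.2 ≤ q.1} from hp)]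
      rw [this]
      refine Measurable.indicator ?_ ?_
      · exact ((by fun_prop : Measurable fun q : ℝ × ℝ => (q.1 - q.2) ^ (α - 1)).ennreal_ofReal).mul
          ((hwm.comp measurable_snd).ennreal_ofReal)
      · exact (measurableSet_lt measurable_const measurable_snd).inter
          (measurableSet_le measurable_snd measurable_fst)
    -- pointwise a.e. bound: g t ≤ ofReal C * ∫⁻ s in Ioo a b, F t s
    have hptwise : ∀ᵐ t ∂(volume.restrict (Ioo a b)),
        g t ≤ ENNReal.ofReal C * ∫⁻ s in Ioo a b, F t s := by
      have hineq' : ∀ᵐ t ∂(volume.restrict (Ioo a b)),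
          w t ≤ C * ∫ s in (0:ℝ)..t, (t - s) ^ (α - 1) * w s :=
        ae_restrict_of_ae_restrict_of_subset hsub hineq
      have hIH : ∀ᵐ s : ℝ ∂volume, s ∈ Ioo (0:ℝ) a → w s = 0 :=
        (ae_restrict_iff' measurableSet_Ioo).mp IH
      have hne : ∀ᵐ s : ℝ ∂volume, s ≠ a := by
        rw [ae_iff]; simpa using Real.volume_singleton (x := a)
      have hw0' : ∀ᵐ s : ℝ ∂volume, s ∈ Ioo (0:ℝ) T → 0 ≤ w s :=
        (ae_restrict_iff' measurableSet_Ioo).mp hw0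
      filter_upwards [hineq', ae_restrict_mem measurableSet_Ioo] with t hwt ht
      have ht0 : 0 < t := lt_of_le_of_lt ha ht.1
      have htT : t < T := lt_of_lt_of_le ht.2 hbT
      -- rewrite the interval integral as an integral over Ioc a t
      have hKm : ∀ᵐ s ∂(volume.restrict (Ioc (0:ℝ) t)),
          (t - s) ^ (α - 1) * w s
            = (Ioc a t).indicator (fun s => (t - s) ^ (α - 1) * w s) s := by
        rw [ae_restrict_iff' measurableSet_Ioc]
        filter_upwards [hIH, hne] with s hs1 hs2 hs
        rcases lt_trichotomy s a with h | h | h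
        · rw [hs1 ⟨hs.1, h⟩, Set.indicator_of_notMem (by simp [h, not_lt.mpr h.le]), mul_zero]
        · exact absurd h hs2
        · rw [Set.indicator_of_mem (show s ∈ Ioc a t from ⟨h, hs.2⟩)]
      have hstep1 : (∫ s in (0:ℝ)..t, (t - s) ^ (α - 1) * w s)
          = ∫ s in Ioc a t, (t - s) ^ (α - 1) * w s := by
        rw [intervalIntegral.integral_of_le ht0.le, integral_congr_ae hKm,
          setIntegral_indicator measurableSet_Ioc]
        congr 1
        rw [Set.Ioc_inter_Ioc, max_eq_right ha, min_self]
      -- pass to lintegral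
      have hstep2 : ENNReal.ofReal (∫ s in Ioc a t, (t - s) ^ (α - 1) * w s)
          ≤ ∫⁻ s in Ioc a t, ENNReal.ofReal ((t - s) ^ (α - 1) * w s) := by
        by_cases hint : IntegrableOn (fun s => (t - s) ^ (α - 1) * w s) (Ioc a t) volume
        · refine (ofReal_integral_eq_lintegral_ofReal hint ?_).le
          rw [Filter.EventuallyLE, ae_restrict_iff' measurableSet_Ioc]
          filter_upwards [hw0'] with s hs hsmem
          simp only [Pi.zero_apply]
          have : (0:ℝ) < s := lt_of_le_of_lt ha hsmem.1
          exact mul_nonneg (Real.rpow_nonneg (by linarith [hsmem.2]) _)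
            (hs ⟨this, lt_of_le_of_lt hsmem.2 htT⟩)
        · rw [integral_undef hint]; simp
      have hstep3 : (∫⁻ s in Ioc a t, ENNReal.ofReal ((t - s) ^ (α - 1) * w s))
          = ∫⁻ s in Ioo a b, F t s := by
        have heq : ∀ s ∈ Ioc a t, ENNReal.ofReal ((t - s) ^ (α - 1) * w s)
            = ENNReal.ofReal ((t - s) ^ (α - 1)) * g s := fun s hs =>
          ENNReal.ofReal_mul (Real.rpow_nonneg (by linarith [hs.2]) _)
        rw [setLIntegral_congr_fun measurableSet_Ioc heq]
        rw [hF]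
        rw [lintegral_indicator measurableSet_Ioc]
        rw [Measure.restrict_restrict measurableSet_Ioc]
        congr 1
        rw [Set.inter_eq_left.mpr]
        intro s hs
        exact ⟨hs.1, lt_of_le_of_lt hs.2 ht.2⟩
      calc g t ≤ ENNReal.ofReal (C * ∫ s in (0:ℝ)..t, (t - s) ^ (α - 1) * w s) :=
            ENNReal.ofReal_le_ofReal hwt
        _ = ENNReal.ofReal C * ENNReal.ofReal (∫ s in (0:ℝ)..t, (t - s) ^ (α - 1) * w s) :=
            ENNReal.ofReal_mul hC
        _ ≤ ENNReal.ofReal C * ∫⁻ s in Ioo a b, F t s := by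
            rw [hstep1]
            exact mul_le_mul_right (hstep2.trans_eq hstep3) _
    -- inner bound after swapping
    have inner_bound : ∀ s ∈ Ioo a b,
        (∫⁻ t in Ioo a b, F t s) ≤ ENNReal.ofReal (δ ^ α / α) * g s := by
      intro s hs
      have hFs : ∀ t : ℝ, F t s
          = (Ici s).indicator (fun t => ENNReal.ofReal ((t - s) ^ (α - 1))) t * g s := by
        intro t
        by_cases hst : s ≤ t
        · simp only [hF, Set.indicator_of_mem (show s ∈ Ioc a t from ⟨hs.1, hst⟩),
            Set.indicator_of_mem (show t ∈ Ici s from hst)]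
        · simp only [hF, Set.indicator_of_notMem (show s ∉ Ioc a t from fun h => hst h.2),
            Set.indicator_of_notMem (show t ∉ Ici s from hst), zero_mul]
      simp only [hFs]
      rw [lintegral_mul_const _ (Measurable.indicator (by fun_prop) measurableSet_Ici)]
      refine mul_le_mul_left ?_ _
      rw [lintegral_indicator measurableSet_Ici, Measure.restrict_restrict measurableSet_Ici]
      have hsubset : Ici s ∩ Ioo a b ⊆ Icc s (s + δ) := by
        intro x hx
        exact ⟨hx.1, by linarith [hx.2.2, hs.1]⟩
      refine le_trans (lintegral_mono_set hsubset) ?_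
      -- compute ∫⁻ t in Icc s (s+δ), ofReal ((t - s) ^ (α - 1)) = ofReal (δ^α/α)
      have hint2 : IntegrableOn (fun t => (t - s) ^ (α - 1)) (Icc s (s + δ)) volume := by
        have h1 : IntervalIntegrable (fun x : ℝ => x ^ (α - 1)) volume 0 δ :=
          intervalIntegral.intervalIntegrable_rpow' (by linarith)
        have h2 := h1.comp_sub_right s
        rw [intervalIntegrable_iff_integrableOn_Icc_of_le (by linarith)] at h2
        simpa [add_comm] using h2
      have hnn : 0 ≤ᵐ[volume.restrict (Icc s (s + δ))] fun t => (t - s) ^ (α - 1) := by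
        rw [Filter.EventuallyLE, ae_restrict_iff' measurableSet_Icc]
        refine ae_of_all _ fun t htmem => ?_
        simp only [Pi.zero_apply]
        exact Real.rpow_nonneg (by linarith [htmem.1]) _
      rw [← ofReal_integral_eq_lintegral_ofReal hint2 hnn]
      refine le_of_eq (congrArg ENNReal.ofReal ?_)
      have e1 : ∫ t in Icc s (s + δ), (t - s) ^ (α - 1)
          = ∫ t in s..(s + δ), (t - s) ^ (α - 1) := by
        rw [intervalIntegral.integral_of_le (by linarith), integral_Icc_eq_integral_Ioc]
      rw [e1, intervalIntegral.integral_comp_sub_right (fun x => x ^ (α - 1)) s]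
      simp only [sub_self, add_sub_cancel_left]
      rw [integral_rpow (Or.inl (by linarith))]
      rw [sub_add_cancel, Real.zero_rpow hα.ne']
      ring
    -- main self-bounding inequality
    have main : I ≤ ENNReal.ofReal (C * (δ ^ α / α)) * I := by
      calc I ≤ ∫⁻ t in Ioo a b, ENNReal.ofReal C * ∫⁻ s in Ioo a b, F t s :=
            lintegral_mono_ae hptwise
        _ = ENNReal.ofReal C * ∫⁻ t in Ioo a b, ∫⁻ s in Ioo a b, F t s :=
            lintegral_const_mul' _ _ ENNReal.ofReal_ne_top
        _ = ENNReal.ofReal C * ∫⁻ s in Ioo a b, ∫⁻ t in Ioo a b, F t s := by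
            rw [lintegral_lintegral_swap hFm.aemeasurable]
        _ ≤ ENNReal.ofReal C * ∫⁻ s in Ioo a b, ENNReal.ofReal (δ ^ α / α) * g s := by
            refine mul_le_mul_right (lintegral_mono_ae ?_) _
            filter_upwards [ae_restrict_mem measurableSet_Ioo] with s hs
            exact inner_bound s hs
        _ = ENNReal.ofReal C * (ENNReal.ofReal (δ ^ α / α) * I) := by
            rw [lintegral_const_mul' _ _ ENNReal.ofReal_ne_top]
        _ = ENNReal.ofReal (C * (δ ^ α / α)) * I := by
            rw [ENNReal.ofReal_mul hC, mul_assoc]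
    -- finiteness of I
    have hIfin : I ≠ ⊤ := by
      have hle : I ≤ ∫⁻ t in Icc (0:ℝ) T, ‖w t‖₊ := by
        refine le_trans (lintegral_mono fun t => Real.ofReal_le_enorm _) ?_
        exact lintegral_mono_set fun x hx =>
          ⟨le_of_lt (lt_of_le_of_lt ha hx.1), le_trans hx.2.le hbT⟩
      exact (lt_of_le_of_lt hle hwint.2).ne
    -- conclude I = 0
    have hI0 : I = 0 := by
      by_contra h0
      have hlt1 : ENNReal.ofReal (C * (δ ^ α / α)) < 1 := by
        refine lt_of_le_of_lt (ENNReal.ofReal_le_ofReal hδC) ?_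
        rw [ENNReal.ofReal_lt_one]
        norm_num
      have hlt : ENNReal.ofReal (C * (δ ^ α / α)) * I < 1 * I :=
        ENNReal.mul_lt_mul_left h0 hIfin hlt1
      have := lt_of_le_of_lt main hlt
      rw [one_mul] at this
      exact lt_irrefl _ this
    -- translate
    have hg0 : ∀ᵐ s ∂(volume.restrict (Ioo a b)), g s = 0 :=
      (lintegral_eq_zero_iff hwm.ennreal_ofReal).mp hI0
    filter_upwards [hg0, ae_restrict_of_ae_restrict_of_subset hsub hw0] with s h1 h2
    have : w s ≤ 0 := by simpa [hg, ENNReal.ofReal_eq_zero] using h1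
    linarith
  -- combine with IH
  have h1 : ∀ᵐ s ∂(volume : Measure ℝ), s ∈ Ioo (0:ℝ) a → w s = 0 :=
    (ae_restrict_iff' measurableSet_Ioo).mp IH
  have h2 : ∀ᵐ s ∂(volume : Measure ℝ), s ∈ Ioo a b → w s = 0 :=
    (ae_restrict_iff' measurableSet_Ioo).mp ae0
  have h3 : ∀ᵐ s : ℝ ∂volume, s ≠ a := by
    rw [ae_iff]
    simpa using Real.volume_singleton (x := a)
  rw [ae_restrict_iff' measurableSet_Ioo]
  filter_upwards [h1, h2, h3] with s hs1 hs2 hs3 hs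
  rcases lt_trichotomy s a with h | h | h
  · exact hs1 ⟨hs.1, h⟩
  · exact absurd h hs3
  · exact hs2 ⟨h, hs.2⟩

/-- Gronwall-type lemma with a weakly singular kernel: if `0 < α < 1`, `T > 0`, `C ≥ 0`,
`v ∈ L¹([0,T])`, `v ≥ 0` a.e. on `(0,T)` and
`v(t) ≤ C ∫_0^t (t-s)^(α-1) v(s) ds` for a.e. `t ∈ (0,T)`, then `v = 0` a.e. on `(0,T)`. -/
theorem gronwall_singular_kernel (α T C : ℝ) (hα : 0 < α) (hα1 : α < 1) (hT : 0 < T)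
    (hC : 0 ≤ C) (v : ℝ → ℝ)
    (hv : IntegrableOn v (Set.Icc 0 T) volume)
    (hnonneg : ∀ᵐ t ∂(volume.restrict (Set.Ioo (0 : ℝ) T)), 0 ≤ v t)
    (hineq : ∀ᵐ t ∂(volume.restrict (Set.Ioo (0 : ℝ) T)),
        v t ≤ C * ∫ s in (0 : ℝ)..t, (t - s) ^ (α - 1) * v s) :
    ∀ᵐ t ∂(volume.restrict (Set.Ioo (0 : ℝ) T)), v t = 0 := by
  set A := hv.aestronglyMeasurable with hA
  set w := A.mk v with hw
  have hwm : Measurable w := A.stronglyMeasurable_mk.measurable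
  have hvw : v =ᵐ[volume.restrict (Set.Icc 0 T)] w := A.ae_eq_mk
  have hvw' : ∀ᵐ t ∂(volume.restrict (Set.Ioo (0:ℝ) T)), v t = w t :=
    ae_restrict_of_ae_restrict_of_subset Set.Ioo_subset_Icc_self hvw
  have hwint : IntegrableOn w (Set.Icc 0 T) volume := hv.congr hvw
  have hw0 : ∀ᵐ t ∂(volume.restrict (Set.Ioo (0:ℝ) T)), 0 ≤ w t := by
    filter_upwards [hnonneg, hvw'] with t h1 h2
    rw [← h2]; exact h1
  have hwineq : ∀ᵐ t ∂(volume.restrict (Set.Ioo (0:ℝ) T)),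
      w t ≤ C * ∫ s in (0:ℝ)..t, (t - s) ^ (α - 1) * w s := by
    filter_upwards [hineq, hvw', ae_restrict_mem measurableSet_Ioo] with t h1 h2 ht
    rw [← h2]
    refine h1.trans (le_of_eq ?_)
    congr 1
    have hsub2 : Set.Ioc (0:ℝ) t ⊆ Set.Icc 0 T := fun x hx => ⟨hx.1.le, hx.2.trans ht.2.le⟩
    have hae := ae_restrict_of_ae_restrict_of_subset hsub2 hvw
    rw [intervalIntegral.integral_of_le ht.1.le, intervalIntegral.integral_of_le ht.1.le]
    exact integral_congr_ae (hae.mono fun s hs => by simp only []; rw [hs])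
  set δ : ℝ := (α / (2 * (C + 1))) ^ (α⁻¹ : ℝ) with hδdef
  have hbase : 0 < α / (2 * (C + 1)) := by positivity
  have hδ : 0 < δ := Real.rpow_pos_of_pos hbase _
  have hδα : δ ^ α = α / (2 * (C + 1)) := Real.rpow_inv_rpow hbase.le hα.ne'
  have hδC : C * (δ ^ α / α) ≤ 1 / 2 := by
    have e : δ ^ α / α = 1 / (2 * (C + 1)) := by
      rw [hδα]; field_simp
    rw [e, mul_one_div, div_le_div_iff₀ (by positivity) (by norm_num)]
    linarith
  have Hstep := gronwall_step α T C δ hα hα1 hT hC hδ hδC w hwm hwint hw0 hwineq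
  have Hn : ∀ n : ℕ, ∀ᵐ s ∂(volume.restrict (Set.Ioo (0:ℝ) (min ((n:ℝ) * δ) T))), w s = 0 := by
    intro n
    induction n with
    | zero =>
      rw [Nat.cast_zero, zero_mul, min_eq_left hT.le, Set.Ioo_self, Measure.restrict_empty]
      simp
    | succ n ih =>
      have h := Hstep ((n:ℝ) * δ) (by positivity) ih
      have harith : ((n + 1 : ℕ) : ℝ) * δ = (n:ℝ) * δ + δ := by push_cast; ring
      rw [harith]
      exact h
  obtain ⟨n, hn⟩ := exists_nat_ge (T / δ)
  have hTn : T ≤ (n:ℝ) * δ := by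
    rw [div_le_iff₀ hδ] at hn; linarith
  have hfin := Hn n
  rw [min_eq_right hTn] at hfin
  filter_upwards [hfin, hvw'] with t h1 h2
  rw [h2]; exact h1
end
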